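/- Let Δ be the set of m-tuples a = (a₁,...,aₘ) ∈ Hᵐ of non-collinear points, and let M(a) denote the unique minimizer over C of x ↦ Σᵢ wᵢ‖x - aᵢ‖. Then the solution map M : Δ → H is continuous (in the norm topology): if aᵏ → a in Hᵐ with a, aᵏ ∈ Δ, then M(aᵏ) → M(a). -/

import Mathlib

open Finset Filter
open scoped RealInnerProductSpace Topology

set_option linter.unusedSectionVars false
set_option linter.unusedVariables false

section AuxLemmas

variable {H : Type*} [NormedAddCommGroup H] [InnerProductSpace ℝ H] [CompleteSpace H]

/-- Existence of the metric projection onto a nonempty closed convex set,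
with the variational characterization. -/
lemma proj_exists {C : Set H} (hCne : C.Nonempty) (hCclosed : IsClosed C)
    (hCconv : Convex ℝ C) (q : H) :
    ∃ p, p ∈ C ∧ ∀ c ∈ C, ⟪q - p, c - p⟫ ≤ 0 := by
  obtain ⟨v, hv, hveq⟩ := exists_norm_eq_iInf_of_complete_convex hCne
    hCclosed.isComplete hCconv q
  exact ⟨v, hv, (norm_eq_iInf_iff_real_inner_le_zero hCconv hv).1 hveq⟩

lemma proj_unique {C : Set H} {q p p' : H} (hp : p ∈ C) (hp' : p' ∈ C)
    (h : ∀ c ∈ C, ⟪q - p, c - p⟫ ≤ 0) (h' : ∀ c ∈ C, ⟪q - p', c - p'⟫ ≤ 0) :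
    p = p' := by
  have h1 := h p' hp'
  have h2 := h' p hp
  have key : ⟪p' - p, p' - p⟫ ≤ 0 := by
    have e1 : (q - p) - (q - p') = p' - p := by abel
    have e2 : p - p' = -(p' - p) := by abel
    calc ⟪p' - p, p' - p⟫ = ⟪q - p, p' - p⟫ - ⟪q - p', p' - p⟫ := by
          rw [← inner_sub_left, e1]
      _ = ⟪q - p, p' - p⟫ + ⟪q - p', p - p'⟫ := by
          rw [e2, inner_neg_right]; ring
      _ ≤ 0 := add_nonpos h1 h2
  have : p' - p = 0 := by
    have := real_inner_self_nonneg (x := p' - p)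
    have hz : ⟪p' - p, p' - p⟫ = 0 := le_antisymm key this
    exact inner_self_eq_zero.mp hz
  have := sub_eq_zero.mp this
  exact this.symm

lemma proj_nonexpansive {C : Set H} {q q' p p' : H} (hp : p ∈ C) (hp' : p' ∈ C)
    (h : ∀ c ∈ C, ⟪q - p, c - p⟫ ≤ 0) (h' : ∀ c ∈ C, ⟪q' - p', c - p'⟫ ≤ 0) :
    ‖p - p'‖ ≤ ‖q - q'‖ := by
  have h1 : ⟪p - p', p - q⟫ ≤ 0 := by
    have := h p' hp'
    have e : ⟪p - p', p - q⟫ = ⟪q - p, p' - p⟫ := by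
      rw [show p - p' = -(p' - p) by abel, show p - q = -(q - p) by abel,
        inner_neg_neg, real_inner_comm]
    rw [e]; exact this
  have h2 : ⟪p - p', q' - p'⟫ ≤ 0 := by
    have := h' p hp
    rwa [real_inner_comm] at this
  have key : ‖p - p'‖ ^ 2 ≤ ⟪p - p', q - q'⟫ := by
    have e : ⟪p - p', p - p'⟫ = ⟪p - p', p - q⟫ + ⟪p - p', q - q'⟫ + ⟪p - p', q' - p'⟫ := by
      rw [← inner_add_right, ← inner_add_right]
      congr 1
      abel
    have := real_inner_self_eq_norm_sq (x := p - p')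
    nlinarith [h1, h2]
  have hcs : ⟪p - p', q - q'⟫ ≤ ‖p - p'‖ * ‖q - q'‖ := real_inner_le_norm _ _
  rcases eq_or_lt_of_le (norm_nonneg (p - p')) with hz | hz
  · rw [← hz]; exact norm_nonneg _
  · nlinarith


end AuxLemmas

section AuxLemmas2

variable {H : Type*} [NormedAddCommGroup H] [InnerProductSpace ℝ H]

/-- First-order optimality condition: if `x` minimizes the weighted Fermat objective on a
convex set `C` and `x` differs from all anchors, then the directional derivative toward any
`c ∈ C` is nonnegative. -/
lemma grad_ineq {m : ℕ} (w : Fin m → ℝ)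
    {C : Set H} (hCconv : Convex ℝ C) (b : Fin m → H) {x : H} (hx : x ∈ C)
    (hmin : IsMinOn (fun y => ∑ i, w i * ‖y - b i‖) C x) (hd : ∀ i, x ≠ b i)
    {c : H} (hc : c ∈ C) :
    0 ≤ ∑ i, (w i / ‖x - b i‖) * ⟪x - b i, c - x⟫ := by
  set u : H := c - x with hu
  set v : Fin m → H := fun i => x - b i with hv
  have hvne : ∀ i, v i ≠ 0 := fun i => sub_ne_zero.mpr (hd i)
  have hvpos : ∀ i, 0 < ‖v i‖ := fun i => norm_pos_iff.mpr (hvne i)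
  -- the difference-quotient function
  set φ : ℝ → ℝ := fun s => ∑ i, w i * ((2 * ⟪v i, u⟫ + s * ‖u‖ ^ 2) / (‖v i + s • u‖ + ‖v i‖))
    with hφ
  have claim1 : ∀ s ∈ Set.Ioc (0 : ℝ) 1, 0 ≤ φ s := by
    intro s hs
    have hspos : (0 : ℝ) < s := hs.1
    have hs1 : s ≤ 1 := hs.2
    have hmem : x + s • u ∈ C := by
      have := hCconv hx hc (by linarith : (0:ℝ) ≤ 1 - s) hspos.le (by ring)
      have e : (1 - s) • x + s • c = x + s • u := by
        rw [hu]; module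
      rwa [e] at this
    have hfs : ∑ i, w i * ‖x - b i‖ ≤ ∑ i, w i * ‖x + s • u - b i‖ := hmin hmem
    have hterm : ∀ i : Fin m,
        (2 * ⟪v i, u⟫ + s * ‖u‖ ^ 2) / (‖v i + s • u‖ + ‖v i‖)
          = (‖v i + s • u‖ - ‖v i‖) / s := by
      intro i
      have hden : (0 : ℝ) < ‖v i + s • u‖ + ‖v i‖ := by
        have := norm_nonneg (v i + s • u); linarith [hvpos i]
      rw [div_eq_div_iff hden.ne' hspos.ne']
      have hsq : ‖v i + s • u‖ ^ 2 = ‖v i‖ ^ 2 + 2 * (s * ⟪v i, u⟫) + s ^ 2 * ‖u‖ ^ 2 := by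
        rw [@norm_add_sq_real, real_inner_smul_right, norm_smul]
        rw [Real.norm_eq_abs, abs_of_pos hspos]
        ring
      nlinarith [hsq]
    calc (0 : ℝ) ≤ ((∑ i, w i * ‖x + s • u - b i‖) - ∑ i, w i * ‖x - b i‖) / s :=
          div_nonneg (by linarith) hspos.le
      _ = φ s := by
          rw [hφ]
          rw [← Finset.sum_sub_distrib, Finset.sum_div]
          refine Finset.sum_congr rfl fun i _ => ?_
          rw [hterm i]
          have e : x + s • u - b i = v i + s • u := by rw [hv, add_sub_right_comm]
          rw [e]
          ring
  -- the limit of φ along 𝓝[>] 0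
  have claim2 : Tendsto φ (𝓝[>] (0:ℝ)) (𝓝 (∑ i, w i *
      ((2 * ⟪v i, u⟫ + 0 * ‖u‖ ^ 2) / (‖v i + (0:ℝ) • u‖ + ‖v i‖)))) := by
    refine Tendsto.mono_left ?_ nhdsWithin_le_nhds
    refine tendsto_finset_sum _ fun i _ => ?_
    refine Tendsto.const_mul _ (Tendsto.div ?_ ?_ ?_)
    · exact (continuous_const.add (continuous_id.mul continuous_const)).tendsto 0
    · exact ((continuous_const.add (continuous_id.smul continuous_const)).norm.add
        continuous_const).tendsto 0
    · have : ‖v i + (0:ℝ) • u‖ + ‖v i‖ = 2 * ‖v i‖ := by simp [two_mul]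
      rw [this]
      exact (mul_pos two_pos (hvpos i)).ne'
  have key : 0 ≤ ∑ i, w i * ((2 * ⟪v i, u⟫ + 0 * ‖u‖ ^ 2) / (‖v i + (0:ℝ) • u‖ + ‖v i‖)) := by
    refine ge_of_tendsto claim2 ?_
    filter_upwards [Ioc_mem_nhdsGT_of_mem (Set.mem_Ico.mpr ⟨le_refl 0, one_pos⟩)] with s hs
    exact claim1 s hs
  calc (0:ℝ) ≤ _ := key
    _ = ∑ i, (w i / ‖x - b i‖) * ⟪x - b i, c - x⟫ := by
        refine Finset.sum_congr rfl fun i _ => ?_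
        have : ‖v i + (0:ℝ) • u‖ + ‖v i‖ = 2 * ‖v i‖ := by simp [two_mul]
        rw [this]
        rw [show (2 * ⟪v i, u⟫ + 0 * ‖u‖ ^ 2) = 2 * ⟪v i, u⟫ by ring]
        rw [mul_comm (2:ℝ) ‖v i‖] at *
        field_simp [hv, hu]
        ring


/-- The minimizer is the projection of a point of the convex hull of the anchors. -/
lemma minimizer_proj_char {m : ℕ} (hm : 1 ≤ m) (w : Fin m → ℝ) (hw : ∀ i, 0 < w i)
    {C : Set H} (hCconv : Convex ℝ C) (b : Fin m → H) {x : H} (hx : x ∈ C)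
    (hmin : IsMinOn (fun y => ∑ i, w i * ‖y - b i‖) C x) :
    ∃ q ∈ convexHull ℝ (Set.range b), ∀ c ∈ C, ⟪q - x, c - x⟫ ≤ 0 := by
  by_cases hcase : ∃ j, x = b j
  · obtain ⟨j, hj⟩ := hcase
    refine ⟨x, ?_, fun c hc => ?_⟩
    · exact subset_convexHull ℝ _ ⟨j, hj.symm⟩
    · simp
  · push_neg at hcase
    haveI : Nonempty (Fin m) := Fin.pos_iff_nonempty.mp (by omega)
    set d : Fin m → ℝ := fun i => ‖x - b i‖ with hd
    have hdpos : ∀ i, 0 < d i := fun i => norm_pos_iff.mpr (sub_ne_zero.mpr (hcase i))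
    set W : ℝ := ∑ i, w i / d i with hW
    have hWpos : 0 < W :=
      Finset.sum_pos (fun i _ => div_pos (hw i) (hdpos i)) Finset.univ_nonempty
    set lam : Fin m → ℝ := fun i => (w i / d i) / W with hlam
    have hlsum : ∑ i, lam i = 1 := by
      rw [hlam, ← Finset.sum_div, ← hW, div_self hWpos.ne']
    have hlnn : ∀ i, 0 ≤ lam i := fun i =>
      div_nonneg (div_nonneg (hw i).le (hdpos i).le) hWpos.le
    refine ⟨∑ i, lam i • b i, ?_, fun c hc => ?_⟩
    · exact (convex_convexHull ℝ _).sum_mem (fun i _ => hlnn i) hlsum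
        (fun i _ => subset_convexHull ℝ _ ⟨i, rfl⟩)
    · have e1 : (∑ i, lam i • b i) - x = ∑ i, lam i • (b i - x) := by
        simp_rw [smul_sub]
        rw [Finset.sum_sub_distrib, ← Finset.sum_smul, hlsum, one_smul]
      rw [e1, sum_inner]
      have e2 : ∀ i ∈ Finset.univ, ⟪lam i • (b i - x), c - x⟫
          = -(W⁻¹ * ((w i / d i) * ⟪x - b i, c - x⟫)) := by
        intro i _
        rw [real_inner_smul_left, show b i - x = -(x - b i) by abel, inner_neg_left, hlam]
        ring
      rw [Finset.sum_congr rfl e2, Finset.sum_neg_distrib, ← Finset.mul_sum]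
      exact neg_nonpos_of_nonneg (mul_nonneg (inv_nonneg.mpr hWpos.le)
        (grad_ineq w hCconv b hx hmin hcase hc))




variable {H : Type*} [NormedAddCommGroup H] [InnerProductSpace ℝ H]

/-- Uniqueness of the minimizer when the anchors are non-collinear. -/
lemma minimizer_unique {m : ℕ} (w : Fin m → ℝ) (hw : ∀ i, 0 < w i)
    {C : Set H} (hCconv : Convex ℝ C) (b : Fin m → H)
    (hb : ¬ ∃ u v : H, ∀ i, ∃ t : ℝ, b i = u + t • v)
    {x y : H} (hx : x ∈ C) (hy : y ∈ C)
    (hminx : IsMinOn (fun z => ∑ i, w i * ‖z - b i‖) C x)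
    (hminy : IsMinOn (fun z => ∑ i, w i * ‖z - b i‖) C y) : x = y := by
  by_contra hxy
  set f : H → ℝ := fun z => ∑ i, w i * ‖z - b i‖ with hf
  have hfxy : f x = f y := le_antisymm (hminx hy) (hminy hx)
  set z : H := (2:ℝ)⁻¹ • x + (2:ℝ)⁻¹ • y with hz
  have hzC : z ∈ C := hCconv hx hy (by norm_num) (by norm_num) (by norm_num)
  have hzi : ∀ i, z - b i = (2:ℝ)⁻¹ • ((x - b i) + (y - b i)) := by
    intro i; rw [hz]; module
  have hle : ∀ i, ‖z - b i‖ ≤ (2:ℝ)⁻¹ * (‖x - b i‖ + ‖y - b i‖) := by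
    intro i
    rw [hzi i, norm_smul]
    simp only [Real.norm_eq_abs]
    rw [abs_of_pos (by norm_num : (0:ℝ) < (2:ℝ)⁻¹)]
    gcongr
    exact norm_add_le _ _
  have e : ∑ i, w i * ((2:ℝ)⁻¹ * (‖x - b i‖ + ‖y - b i‖))
      = (2:ℝ)⁻¹ * (f x + f y) := by
    rw [hf]
    simp only [← Finset.sum_add_distrib, Finset.mul_sum]
    refine Finset.sum_congr rfl fun i _ => ?_
    ring
  have hfz_le : f z ≤ f x := by
    have h5 : f z ≤ ∑ i, w i * ((2:ℝ)⁻¹ * (‖x - b i‖ + ‖y - b i‖)) :=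
      Finset.sum_le_sum fun i _ => mul_le_mul_of_nonneg_left (hle i) (hw i).le
    rw [e, ← hfxy] at h5
    linarith
  have hfz_ge : f x ≤ f z := hminx hzC
  have hfz : f z = (2:ℝ)⁻¹ * (f x + f y) := by rw [← hfxy]; linarith
  -- equality in each term
  have hterm : ∀ i, ‖z - b i‖ = (2:ℝ)⁻¹ * (‖x - b i‖ + ‖y - b i‖) := by
    have hsum0 : ∑ i, w i * ((2:ℝ)⁻¹ * (‖x - b i‖ + ‖y - b i‖) - ‖z - b i‖) = 0 := by
      simp_rw [mul_sub]
      rw [Finset.sum_sub_distrib, e]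
      have hfzz : ∑ i, w i * ‖z - b i‖ = f z := rfl
      rw [hfzz]
      linarith
    intro i
    have := (Finset.sum_eq_zero_iff_of_nonneg (fun i _ =>
      mul_nonneg (hw i).le (by linarith [hle i]))).mp hsum0 i (Finset.mem_univ i)
    have hne := (hw i).ne'
    have : (2:ℝ)⁻¹ * (‖x - b i‖ + ‖y - b i‖) - ‖z - b i‖ = 0 := by
      rcases mul_eq_zero.mp this with h | h
      · exact absurd h hne
      · exact h
    linarith
  -- same ray
  have hray : ∀ i, SameRay ℝ (x - b i) (y - b i) := by
    intro i
    rw [sameRay_iff_norm_add]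
    have := hterm i
    rw [hzi i, norm_smul, Real.norm_eq_abs, abs_of_pos (by norm_num : (0:ℝ) < (2:ℝ)⁻¹)] at this
    linarith
  -- collinearity
  apply hb
  refine ⟨x, y - x, fun i => ?_⟩
  rcases hray i with h0 | h0 | ⟨r, s, hr, hs, hrs⟩
  · exact ⟨0, by rw [sub_eq_zero] at h0; rw [← h0]; simp⟩
  · exact ⟨1, by rw [sub_eq_zero] at h0; rw [← h0]; module⟩
  · have hrsne : r ≠ s := by
      intro h
      apply hxy
      rw [h] at hrs
      have h6 := smul_right_injective H hs.ne' hrs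
      exact sub_left_inj.mp h6
    refine ⟨s / (s - r), ?_⟩
    have hsr : s - r ≠ 0 := sub_ne_zero.mpr (Ne.symm hrsne)
    have h2 : r • x - r • b i = s • y - s • b i := by
      rw [← smul_sub, ← smul_sub, hrs]
    have h4 : (s - r) • b i - ((s - r) • x + s • (y - x))
        = (r • x - r • b i) - (s • y - s • b i) := by module
    rw [h2, sub_self] at h4
    have key : (s - r) • b i = (s - r) • x + s • (y - x) := sub_eq_zero.mp h4
    have key2 : (s - r) • (x + (s / (s - r)) • (y - x)) = (s - r) • x + s • (y - x) := by
      rw [smul_add, smul_smul, mul_div_cancel₀ _ hsr]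
    exact smul_right_injective H hsr (key.trans key2.symm)

end AuxLemmas2

theorem solution_map_continuous
    {H : Type*} [NormedAddCommGroup H] [InnerProductSpace ℝ H] [CompleteSpace H]
    {m : ℕ} (hm : 1 ≤ m) (w : Fin m → ℝ) (hw : ∀ i, 0 < w i)
    (C : Set H) (hCne : C.Nonempty) (hCclosed : IsClosed C) (hCconv : Convex ℝ C)
    (M : (Fin m → H) → H)
    (hM : ∀ b : Fin m → H, (¬ ∃ u v : H, ∀ i, ∃ t : ℝ, b i = u + t • v) →
      M b ∈ C ∧ IsMinOn (fun x => ∑ i, w i * ‖x - b i‖) C (M b))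
    (a : Fin m → H) (ha : ¬ ∃ u v : H, ∀ i, ∃ t : ℝ, a i = u + t • v)
    (aseq : ℕ → (Fin m → H))
    (haseq : ∀ k, ¬ ∃ u v : H, ∀ i, ∃ t : ℝ, aseq k i = u + t • v)
    (hconv : Tendsto aseq atTop (𝓝 a)) :
    Tendsto (fun k => M (aseq k)) atTop (𝓝 (M a)) := by
  classical
  obtain ⟨hMaC, hMamin⟩ := hM a ha
  have hMk := fun k => hM (aseq k) (haseq k)
  -- the metric projection onto C
  choose P hPmem hPchar using proj_exists hCne hCclosed hCconv
  have hPcont : Continuous P := by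
    refine LipschitzWith.continuous (K := 1) (LipschitzWith.of_dist_le_mul fun q q' => ?_)
    rw [dist_eq_norm, dist_eq_norm, NNReal.coe_one, one_mul]
    exact proj_nonexpansive (hPmem q) (hPmem q') (hPchar q) (hPchar q')
  -- compact set containing all anchors
  have hci : ∀ i, Tendsto (fun k => aseq k i) atTop (𝓝 (a i)) := fun i =>
    ((continuous_apply i).tendsto a).comp hconv
  set S : Set H := ⋃ i : Fin m, insert (a i) (Set.range fun k => aseq k i) with hS
  have hScomp : IsCompact S := isCompact_iUnion fun i => (hci i).isCompact_insert_range
  set K : Set H := closure (convexHull ℝ S) with hK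
  have hKcomp : IsCompact K :=
    TotallyBounded.isCompact_of_isClosed
      ((totallyBounded_convexHull.mpr hScomp.totallyBounded).closure) isClosed_closure
  have hDcomp : IsCompact (P '' K) := hKcomp.image hPcont
  -- all the minimizers lie in P '' K
  have hmemD : ∀ k, M (aseq k) ∈ P '' K := by
    intro k
    obtain ⟨q, hqhull, hqchar⟩ :=
      minimizer_proj_char hm w hw hCconv (aseq k) (hMk k).1 (hMk k).2
    have hqK : q ∈ K := by
      apply subset_closure
      refine convexHull_mono ?_ hqhull
      rintro _ ⟨i, rfl⟩
      exact Set.mem_iUnion.mpr ⟨i, Set.mem_insert_iff.mpr (Or.inr ⟨k, rfl⟩)⟩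
    have : M (aseq k) = P q :=
      proj_unique (hMk k).1 (hPmem q) hqchar (hPchar q)
    exact ⟨q, hqK, this.symm⟩
  -- main convergence argument via subsequences
  apply tendsto_of_subseq_tendsto
  intro ns hns
  obtain ⟨xstar, _, φ, hφmono, hφtend⟩ :=
    hDcomp.tendsto_subseq (x := fun n => M (aseq (ns n))) fun n => hmemD (ns n)
  have hbtend : Tendsto (fun n => aseq (ns (φ n))) atTop (𝓝 a) :=
    hconv.comp (hns.comp hφmono.tendsto_atTop)
  have hxC : xstar ∈ C :=
    hCclosed.mem_of_tendsto hφtend (Eventually.of_forall fun n => (hMk (ns (φ n))).1)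
  have hxmin : IsMinOn (fun x => ∑ i, w i * ‖x - a i‖) C xstar := by
    refine isMinOn_iff.mpr fun c hc => ?_
    have h1 : Tendsto (fun n => ∑ i, w i * ‖M (aseq (ns (φ n))) - aseq (ns (φ n)) i‖)
        atTop (𝓝 (∑ i, w i * ‖xstar - a i‖)) := by
      refine tendsto_finset_sum _ fun i _ => ?_
      exact ((hφtend.sub (((continuous_apply i).tendsto a).comp hbtend)).norm).const_mul (w i)
    have h2 : Tendsto (fun n => ∑ i, w i * ‖c - aseq (ns (φ n)) i‖)
        atTop (𝓝 (∑ i, w i * ‖c - a i‖)) := by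
      refine tendsto_finset_sum _ fun i _ => ?_
      exact ((tendsto_const_nhds.sub (((continuous_apply i).tendsto a).comp hbtend)).norm).const_mul
        (w i)
    exact le_of_tendsto_of_tendsto' h1 h2 fun n => (hMk (ns (φ n))).2 hc
  have hxeq : xstar = M a :=
    minimizer_unique w hw hCconv a ha hxC hMaC hxmin hMamin
  exact ⟨φ, hxeq ▸ hφtend⟩
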